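/- (Theorem 2) Let D be a probability distribution on ℝ^d × {1,…,c} that is (k_1,…,k_n)-separable with δ-margin, let f : {1,…,c} → ℝ^m be injective, and let ε > 0. Then there exist, for each s ∈ {1,…,n}, a scaling factor c^{(s)} > 0, a unit vector a_s ∈ ℝ^d, boundaries b_{s,1}, …, b_{s,k_s} ∈ ℝ, and weights W^{(s)} ∈ ℝ^{k_s}, together with K = ∏_{s=1}^{n} k_s, a scaling factor c′ > 0, boundaries β_1, …, β_K ∈ ℝ, and a weight matrix W′ ∈ ℝ^{K×m}, such that the 4-layer sigmoid network g : ℝ^d → ℝ^m defined by p^s(x) = Σ_{l=1}^{k_s} W^{(s)}_l · ρ(c^{(s)}(a_sᵀx - b_{s,l})) and g_j(x) = Σ_{l=1}^{K} W′_{l,j} · ρ(c′((1/√n)·Σ_{s=1}^{n} p^s(x) - β_l)) satisfies P_{(x,y)∼D}( max_{1≤j≤m} |g_j(x) - f_j(y)| > ε ) = 0. -/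

import Mathlib

open RealInnerProductSpace MeasureTheory

/-- The sigmoid function `ρ(t) = 1 / (1 + e^{-t})`. -/
noncomputable def sigmoid (t : ℝ) : ℝ := 1 / (1 + Real.exp (-t))

/-- A distribution `μ` on `ℝ^d × {1,…,c}` is `(k_1,…,k_n)`-separable with `δ`-margin:
there exist unit projection vectors `a_1,…,a_n` and boundaries
`b_{s,1} < ⋯ < b_{s,k_s+1}` such that each region
`X_𝐢 = {x : ∀ s, b_{s,i_s} + δ < a_sᵀx < b_{s,i_s+1} - δ}` carries a single label
almost surely, and the union of the regions has full measure. -/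
def IsMultiSeparable {d c : ℕ} {n : ℕ} (k : Fin n → ℕ)
    (μ : Measure (EuclideanSpace ℝ (Fin d) × Fin c)) (δ : ℝ) : Prop :=
  0 < δ ∧
  ∃ (a : Fin n → EuclideanSpace ℝ (Fin d)) (b : ∀ s : Fin n, Fin (k s + 1) → ℝ),
    (∀ s, ‖a s‖ = 1) ∧ (∀ s, StrictMono (b s)) ∧
    (∀ I : ∀ s : Fin n, Fin (k s), ∃ yI : Fin c,
      μ {p | (∀ s, b s (I s).castSucc + δ < ⟪a s, p.1⟫ ∧ ⟪a s, p.1⟫ < b s (I s).succ - δ)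
              ∧ p.2 = yI}
        = μ {p | ∀ s, b s (I s).castSucc + δ < ⟪a s, p.1⟫ ∧
              ⟪a s, p.1⟫ < b s (I s).succ - δ}) ∧
    μ {p | ∃ I : ∀ s : Fin n, Fin (k s),
      ∀ s, b s (I s).castSucc + δ < ⟪a s, p.1⟫ ∧ ⟪a s, p.1⟫ < b s (I s).succ - δ} = 1

lemma one_add_exp_pos (t : ℝ) : 0 < 1 + Real.exp t := by positivity

lemma sigmoid_nonneg (t : ℝ) : 0 ≤ sigmoid t := by
  unfold sigmoid; positivity

lemma sigmoid_le_one (t : ℝ) : sigmoid t ≤ 1 := by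
  unfold sigmoid
  rw [div_le_one (one_add_exp_pos _)]
  linarith [Real.exp_pos (-t)]

lemma sigmoid_le_exp (t : ℝ) : sigmoid t ≤ Real.exp t := by
  unfold sigmoid
  rw [div_le_iff₀ (one_add_exp_pos _)]
  have h := Real.exp_pos t
  have h2 := Real.exp_pos (-t)
  have : Real.exp t * Real.exp (-t) = 1 := by
    rw [← Real.exp_add]; simp
  nlinarith

lemma one_sub_sigmoid_le (t : ℝ) : 1 - sigmoid t ≤ Real.exp (-t) := by
  have h2 := Real.exp_pos (-t)
  have heq : 1 - sigmoid t = Real.exp (-t) / (1 + Real.exp (-t)) := by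
    unfold sigmoid
    field_simp
    ring
  rw [heq, div_le_iff₀ (one_add_exp_pos _)]
  nlinarith

lemma step_approx {k : ℕ} (W : Fin k → ℝ) (P : Fin k → Prop) [DecidablePred P]
    (M : ℝ) (z : Fin k → ℝ)
    (h1 : ∀ l, P l → M ≤ z l) (h2 : ∀ l, ¬ P l → z l ≤ -M) :
    |∑ l, W l * sigmoid (z l) - ∑ l ∈ Finset.univ.filter P, W l|
      ≤ (∑ l, |W l|) * Real.exp (-M) := by
  rw [Finset.sum_filter, ← Finset.sum_sub_distrib, Finset.sum_mul]
  refine (Finset.abs_sum_le_sum_abs _ _).trans (Finset.sum_le_sum fun l _ => ?_)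
  by_cases hP : P l
  · rw [if_pos hP]
    have : W l * sigmoid (z l) - W l = W l * (sigmoid (z l) - 1) := by ring
    rw [this, abs_mul]
    refine mul_le_mul_of_nonneg_left ?_ (abs_nonneg _)
    rw [abs_sub_comm, abs_of_nonneg (by linarith [sigmoid_le_one (z l)])]
    calc 1 - sigmoid (z l) ≤ Real.exp (-(z l)) := one_sub_sigmoid_le _
      _ ≤ Real.exp (-M) := Real.exp_le_exp.mpr (by linarith [h1 l hP])
  · rw [if_neg hP, sub_zero, abs_mul]
    refine mul_le_mul_of_nonneg_left ?_ (abs_nonneg _)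
    rw [abs_of_nonneg (sigmoid_nonneg _)]
    calc sigmoid (z l) ≤ Real.exp (z l) := sigmoid_le_exp _
      _ ≤ Real.exp (-M) := Real.exp_le_exp.mpr (h2 l hP)

lemma sum_filter_le_eq {K : ℕ} (r : Fin K) (g : ℕ → ℝ) :
    (∑ l ∈ Finset.univ.filter (fun l : Fin K => l ≤ r), g l.val)
      = ∑ i ∈ Finset.range (r.val + 1), g i := by
  rw [Finset.sum_filter]
  simp only [Fin.le_def]
  rw [Fin.sum_univ_eq_sum_range (fun i => if i ≤ r.val then g i else 0)]
  rw [← Finset.sum_filter]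
  congr 1
  ext i
  simp only [Finset.mem_filter, Finset.mem_range, Nat.lt_succ_iff]
  omega

lemma exists_scale (A η δ : ℝ) (hA : 0 ≤ A) (hη : 0 < η) (hδ : 0 < δ) :
    ∃ c : ℝ, 0 < c ∧ A * Real.exp (-(c * δ)) < η := by
  set c := max 1 ((Real.log ((A + 1) / η) + 1) / δ) with hc
  refine ⟨c, lt_of_lt_of_le one_pos (le_max_left _ _), ?_⟩
  have hpos : (0:ℝ) < (A + 1) / η := by positivity
  have hcd : Real.log ((A + 1) / η) + 1 ≤ c * δ := by
    rw [← div_le_iff₀ hδ]; exact le_max_right _ _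
  have h1 : (A + 1) / η < Real.exp (c * δ) := by
    rw [← Real.exp_log hpos]
    exact Real.exp_lt_exp.mpr (by linarith)
  have h2 : Real.exp (-(c * δ)) < η / (A + 1) := by
    rw [Real.exp_neg, ← inv_div]
    exact inv_strictAnti₀ hpos h1
  have hE : 0 < Real.exp (-(c * δ)) := Real.exp_pos _
  calc A * Real.exp (-(c * δ)) ≤ (A + 1) * Real.exp (-(c * δ)) := by nlinarith
    _ < (A + 1) * (η / (A + 1)) := mul_lt_mul_of_pos_left h2 (by linarith)
    _ = η := by field_simp

lemma exists_telescope {K m : ℕ} (targ : Fin K → Fin m → ℝ) :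
    ∃ W' : Matrix (Fin K) (Fin m) ℝ, ∀ (r : Fin K) (j : Fin m),
      ∑ l ∈ Finset.univ.filter (fun l => l ≤ r), W' l j = targ r j := by
  classical
  set t' : ℕ → Fin m → ℝ := fun rr j => if hrr : rr < K then targ ⟨rr, hrr⟩ j else 0 with ht'
  set hh : ℕ → Fin m → ℝ := fun rr j => if rr = 0 then 0 else t' (rr - 1) j with hhh
  refine ⟨Matrix.of fun l j => hh (l.val + 1) j - hh l.val j, fun r j => ?_⟩
  show (∑ l ∈ Finset.univ.filter (fun l : Fin K => l ≤ r),
      (fun i : ℕ => hh (i + 1) j - hh i j) l.val) = targ r j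
  rw [sum_filter_le_eq r (fun i : ℕ => hh (i + 1) j - hh i j),
    Finset.sum_range_sub (fun i => hh i j)]
  simp only [hhh, ht', Nat.add_sub_cancel, if_neg (Nat.succ_ne_zero _), if_pos rfl]
  rw [dif_pos r.isLt]
  simp

set_option maxHeartbeats 1600000 in
/-- **Theorem 2.** If the distribution `μ` on `ℝ^d × {1,…,c}` is
`(k_1,…,k_n)`-separable with `δ`-margin, `f : {1,…,c} → ℝ^m` is injective and
`ε > 0`, then there is a 4-layer sigmoid network
`g_j(x) = Σ_l W'_{l,j} ρ(c'((1/√n) Σ_s p^s(x) - β_l))` with subnetworks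
`p^s(x) = Σ_l W^{(s)}_l ρ(c^{(s)}(a_sᵀx - b_{s,l}))` whose output is within `ε` of
`f(y)` in every coordinate, almost surely over `(x,y) ∼ μ`. -/
theorem four_layer_network_perfect_fit {d c m : ℕ} {n : ℕ} (hn : 1 ≤ n)
    (k : Fin n → ℕ) (hk : ∀ s, 0 < k s)
    (μ : Measure (EuclideanSpace ℝ (Fin d) × Fin c)) [IsProbabilityMeasure μ]
    (δ : ℝ) (hsep : IsMultiSeparable k μ δ)
    (f : Fin c → Fin m → ℝ) (hf : Function.Injective f)
    (ε : ℝ) (hε : 0 < ε) :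
    ∃ (cS : Fin n → ℝ) (a : Fin n → EuclideanSpace ℝ (Fin d))
      (b : ∀ s : Fin n, Fin (k s) → ℝ) (W : ∀ s : Fin n, Fin (k s) → ℝ)
      (c' : ℝ) (β : Fin (∏ s : Fin n, k s) → ℝ)
      (W' : Matrix (Fin (∏ s : Fin n, k s)) (Fin m) ℝ),
      (∀ s, 0 < cS s) ∧ (∀ s, ‖a s‖ = 1) ∧ 0 < c' ∧
      μ {p | ∃ j : Fin m, ε <
        |(∑ l : Fin (∏ s : Fin n, k s), W' l j *
            sigmoid (c' * ((1 / Real.sqrt n) *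
              (∑ s : Fin n, ∑ l' : Fin (k s),
                W s l' * sigmoid (cS s * (⟪a s, p.1⟫ - b s l'))) - β l)))
          - f p.2 j|} = 0 := by
  classical
  obtain ⟨hδ, a, b, ha, hb, hlab, hfull⟩ := hsep
  choose y hy using hlab
  haveI hIne : Nonempty (∀ s, Fin (k s)) := ⟨fun s => ⟨0, hk s⟩⟩
  set K := ∏ s : Fin n, k s with hKdef
  -- base for digit encoding
  set B : ℕ := Finset.univ.sup k + 1 with hB
  have hdig : ∀ (I : ∀ s, Fin (k s)) (s : Fin n), (I s).val + 1 < B := by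
    intro I s
    have h1 : k s ≤ Finset.univ.sup k := Finset.le_sup (Finset.mem_univ s)
    have h2 := (I s).isLt
    omega
  -- natural-number code of a region
  set v : (∀ s, Fin (k s)) → ℕ := fun I => ∑ s, ((I s).val + 1) * B ^ (s.val) with hv
  have hvinj : Function.Injective v := by
    intro I J hIJ
    set F : (∀ s, Fin (k s)) → (Fin n → Fin B) := fun I s => ⟨(I s).val + 1, hdig I s⟩ with hF
    have hvF : ∀ I, v I = (finFunctionFinEquiv (F I) : ℕ) := by
      intro I; rw [finFunctionFinEquiv_apply]
    have hFeq : F I = F J := by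
      apply finFunctionFinEquiv.injective
      apply Fin.val_injective
      rw [← hvF, ← hvF, hIJ]
    funext s
    have := congrFun hFeq s
    simp only [F, Fin.mk.injEq] at this
    exact Fin.ext (by omega)
  have hsn : (0:ℝ) < Real.sqrt n := by
    apply Real.sqrt_pos.mpr
    exact_mod_cast Nat.lt_of_lt_of_le Nat.zero_lt_one hn
  have hsn' : Real.sqrt (n:ℝ) ≠ 0 := ne_of_gt hsn
  have hBpos : (0:ℝ) < (B:ℝ) := by positivity
  -- the sorted values
  set V : Finset ℕ := Finset.univ.image v with hV
  have hVcard : V.card = K := by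
    rw [hV, Finset.card_image_of_injective _ hvinj, Finset.card_univ, Fintype.card_pi]
    simp [hKdef]
  set e := V.orderIsoOfFin hVcard with he
  set Iof : Fin K → (∀ s, Fin (k s)) := fun l => Function.invFun v ((e l : ℕ)) with hIofdef
  have hIof : ∀ l, v (Iof l) = (e l : ℕ) := by
    intro l
    have hmem : ((e l : ℕ)) ∈ Finset.univ.image v := (e l).2
    obtain ⟨I, _, hI⟩ := Finset.mem_image.mp hmem
    exact Function.invFun_eq ⟨I, hI⟩
  -- second layer targets and weights
  obtain ⟨W', hW'tel⟩ := exists_telescope (fun (l : Fin K) (j : Fin m) => f (y (Iof l)) j)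
  -- first-layer weights and boundaries
  set W1 : ∀ s : Fin n, Fin (k s) → ℝ := fun s _ => Real.sqrt n * (B:ℝ) ^ (s.val) with hW1
  set b1 : ∀ s : Fin n, Fin (k s) → ℝ := fun s l => b s l.castSucc with hb1
  -- constants
  set A1 : ℝ := ∑ s : Fin n, (k s : ℝ) * (B:ℝ) ^ (s.val) with hA1
  obtain ⟨c0, hc0pos, hc0⟩ := exists_scale A1 (1/4) δ
    (Finset.sum_nonneg fun s _ => by positivity) (by norm_num) hδ
  set A2 : ℝ := ∑ l : Fin K, ∑ j : Fin m, |W' l j| with hA2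
  obtain ⟨c', hc'pos, hc'⟩ := exists_scale A2 ε (1/4)
    (Finset.sum_nonneg fun l _ => Finset.sum_nonneg fun j _ => abs_nonneg _) hε (by norm_num)
  set β : Fin K → ℝ := fun l => ((e l : ℕ) : ℝ) - 1/2 with hβ
  refine ⟨fun _ => c0, a, b1, W1, c', β, W', fun _ => hc0pos, ha, hc'pos, ?_⟩
  -- the key pointwise estimate on each region
  have key : ∀ (I : ∀ s, Fin (k s)) (x : EuclideanSpace ℝ (Fin d)),
      (∀ s, b s (I s).castSucc + δ < ⟪a s, x⟫ ∧ ⟪a s, x⟫ < b s (I s).succ - δ) →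
      ∀ j : Fin m,
      |(∑ l : Fin K, W' l j *
          sigmoid (c' * ((1 / Real.sqrt n) *
            (∑ s : Fin n, ∑ l' : Fin (k s),
              W1 s l' * sigmoid (c0 * (⟪a s, x⟫ - b1 s l'))) - β l)))
        - f (y I) j| ≤ ε := by
    intro I x hx j
    -- layer-1 estimate for each s
    have hs : ∀ s : Fin n,
        |(∑ l' : Fin (k s), W1 s l' * sigmoid (c0 * (⟪a s, x⟫ - b1 s l')))
          - Real.sqrt n * (((I s).val + 1 : ℝ) * (B:ℝ) ^ (s.val))|
        ≤ (k s : ℝ) * (Real.sqrt n * (B:ℝ) ^ (s.val)) * Real.exp (-(c0 * δ)) := by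
      intro s
      have h1 : ∀ l : Fin (k s), l ≤ I s → c0 * δ ≤ c0 * (⟪a s, x⟫ - b1 s l) := by
        intro l hl
        have hble : b s l.castSucc ≤ b s (I s).castSucc :=
          (hb s).monotone (by simpa using hl)
        have := (hx s).1
        have : δ ≤ ⟪a s, x⟫ - b1 s l := by
          simp only [hb1]; linarith
        exact mul_le_mul_of_nonneg_left this hc0pos.le
      have h2 : ∀ l : Fin (k s), ¬ l ≤ I s → c0 * (⟪a s, x⟫ - b1 s l) ≤ -(c0 * δ) := by
        intro l hl
        have hlt : I s < l := not_le.mp hl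
        have hsucc : (I s).succ ≤ l.castSucc := by
          simp only [Fin.le_def, Fin.val_succ, Fin.coe_castSucc]
          exact hlt
        have hble : b s (I s).succ ≤ b s l.castSucc := (hb s).monotone hsucc
        have := (hx s).2
        have hle : ⟪a s, x⟫ - b1 s l ≤ -δ := by
          simp only [hb1]; linarith
        calc c0 * (⟪a s, x⟫ - b1 s l) ≤ c0 * (-δ) :=
              mul_le_mul_of_nonneg_left hle hc0pos.le
          _ = -(c0 * δ) := by ring
      have hstep := step_approx (W1 s) (fun l => l ≤ I s) (c0 * δ)
        (fun l => c0 * (⟪a s, x⟫ - b1 s l)) h1 h2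
      have hfs : ∑ l ∈ Finset.univ.filter (fun l : Fin (k s) => l ≤ I s), W1 s l
          = Real.sqrt n * (((I s).val + 1 : ℝ) * (B:ℝ) ^ (s.val)) := by
        have hrfl : (∑ l ∈ Finset.univ.filter (fun l : Fin (k s) => l ≤ I s), W1 s l)
            = ∑ l ∈ Finset.univ.filter (fun l : Fin (k s) => l ≤ I s),
                (fun _ : ℕ => Real.sqrt n * (B:ℝ) ^ (s.val)) l.val := rfl
        rw [hrfl, sum_filter_le_eq (I s) (fun _ : ℕ => Real.sqrt n * (B:ℝ) ^ (s.val)),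
          Finset.sum_const, Finset.card_range, nsmul_eq_mul]
        push_cast; ring
      have habs : ∑ l : Fin (k s), |W1 s l| = (k s : ℝ) * (Real.sqrt n * (B:ℝ) ^ (s.val)) := by
        have : ∀ l : Fin (k s), |W1 s l| = Real.sqrt n * (B:ℝ) ^ (s.val) := by
          intro l
          simp only [hW1]
          exact abs_of_nonneg (by positivity)
        rw [Finset.sum_congr rfl fun l _ => this l, Finset.sum_const, Finset.card_univ,
          Fintype.card_fin, nsmul_eq_mul]
      rw [hfs, habs] at hstep
      exact hstep
    -- combine into second-layer input estimate
    set Q : ℝ := (1 / Real.sqrt n) *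
      (∑ s : Fin n, ∑ l' : Fin (k s), W1 s l' * sigmoid (c0 * (⟪a s, x⟫ - b1 s l'))) with hQ
    have hvreal : ((v I : ℕ) : ℝ) = ∑ s : Fin n, (((I s).val + 1 : ℝ) * (B:ℝ) ^ (s.val)) := by
      rw [hv]; push_cast; ring
    have hsum1 : |(∑ s : Fin n, ∑ l' : Fin (k s), W1 s l' * sigmoid (c0 * (⟪a s, x⟫ - b1 s l')))
        - Real.sqrt n * ((v I : ℕ) : ℝ)| ≤ Real.sqrt n * A1 * Real.exp (-(c0 * δ)) := by
      rw [hvreal, Finset.mul_sum, ← Finset.sum_sub_distrib]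
      refine (Finset.abs_sum_le_sum_abs _ _).trans ?_
      calc ∑ s : Fin n, |(∑ l' : Fin (k s), W1 s l' * sigmoid (c0 * (⟪a s, x⟫ - b1 s l')))
            - Real.sqrt n * (((I s).val + 1 : ℝ) * (B:ℝ) ^ (s.val))|
          ≤ ∑ s : Fin n, (k s : ℝ) * (Real.sqrt n * (B:ℝ) ^ (s.val)) * Real.exp (-(c0 * δ)) :=
            Finset.sum_le_sum fun s _ => hs s
        _ = Real.sqrt n * A1 * Real.exp (-(c0 * δ)) := by
            simp only [hA1, Finset.mul_sum, Finset.sum_mul]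
            exact Finset.sum_congr rfl fun s _ => by ring
    have hq : |Q - ((v I : ℕ) : ℝ)| ≤ 1/4 := by
      have heq : Q - ((v I : ℕ) : ℝ) = (1 / Real.sqrt n) *
          ((∑ s : Fin n, ∑ l' : Fin (k s), W1 s l' * sigmoid (c0 * (⟪a s, x⟫ - b1 s l')))
            - Real.sqrt n * ((v I : ℕ) : ℝ)) := by
        rw [hQ]; field_simp
      rw [heq, abs_mul, abs_of_nonneg (by positivity : (0:ℝ) ≤ 1 / Real.sqrt n)]
      calc (1 / Real.sqrt n) * |(∑ s : Fin n, ∑ l' : Fin (k s),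
            W1 s l' * sigmoid (c0 * (⟪a s, x⟫ - b1 s l'))) - Real.sqrt n * ((v I : ℕ) : ℝ)|
          ≤ (1 / Real.sqrt n) * (Real.sqrt n * A1 * Real.exp (-(c0 * δ))) :=
            mul_le_mul_of_nonneg_left hsum1 (by positivity)
        _ = A1 * Real.exp (-(c0 * δ)) := by field_simp
        _ ≤ 1/4 := hc0.le
    have hQlo : ((v I : ℕ) : ℝ) - 1/4 ≤ Q := by
      have := (abs_le.mp hq).1; linarith
    have hQhi : Q ≤ ((v I : ℕ) : ℝ) + 1/4 := by
      have := (abs_le.mp hq).2; linarith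
    -- the rank of the current region
    have hmemV : v I ∈ V := by rw [hV]; exact Finset.mem_image_of_mem v (Finset.mem_univ I)
    set r : Fin K := e.symm ⟨v I, hmemV⟩ with hr
    have her : ((e r : ℕ)) = v I := by
      rw [hr, OrderIso.apply_symm_apply]
    have hIofr : Iof r = I := by
      apply hvinj
      rw [hIof r, her]
    -- layer-2 margins
    have h1 : ∀ l : Fin K, l ≤ r → c' * (1/4) ≤ c' * (Q - β l) := by
      intro l hl
      have hle : ((e l : ℕ)) ≤ v I := by
        rw [← her]
        exact_mod_cast Subtype.coe_le_coe.mpr (e.monotone hl)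
      have hler : ((e l : ℕ) : ℝ) ≤ ((v I : ℕ) : ℝ) := by exact_mod_cast hle
      have : (1:ℝ)/4 ≤ Q - β l := by
        simp only [hβ]; linarith
      exact mul_le_mul_of_nonneg_left this hc'pos.le
    have h2 : ∀ l : Fin K, ¬ l ≤ r → c' * (Q - β l) ≤ -(c' * (1/4)) := by
      intro l hl
      have hlt : r < l := not_le.mp hl
      have hltv : v I < ((e l : ℕ)) := by
        rw [← her]
        exact_mod_cast Subtype.coe_lt_coe.mpr (e.strictMono hlt)
      have hler : ((v I : ℕ) : ℝ) + 1 ≤ ((e l : ℕ) : ℝ) := by exact_mod_cast hltv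
      have hle : Q - β l ≤ -(1/4) := by
        simp only [hβ]; linarith
      calc c' * (Q - β l) ≤ c' * (-(1/4)) := mul_le_mul_of_nonneg_left hle hc'pos.le
        _ = -(c' * (1/4)) := by ring
    have hstep2 := step_approx (fun l => W' l j) (fun l => l ≤ r) (c' * (1/4))
      (fun l => c' * (Q - β l)) h1 h2
    rw [hW'tel r j, hIofr] at hstep2
    have hA2j : ∑ l : Fin K, |W' l j| ≤ A2 := by
      rw [hA2]
      exact Finset.sum_le_sum fun l _ =>
        Finset.single_le_sum (f := fun j' => |W' l j'|) (fun j' _ => abs_nonneg _)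
          (Finset.mem_univ j)
    calc |(∑ l : Fin K, W' l j * sigmoid (c' * (Q - β l))) - f (y I) j|
        ≤ (∑ l : Fin K, |W' l j|) * Real.exp (-(c' * (1/4))) := hstep2
      _ ≤ A2 * Real.exp (-(c' * (1/4))) :=
          mul_le_mul_of_nonneg_right hA2j (Real.exp_pos _).le
      _ ≤ ε := hc'.le
  -- measure-theoretic conclusion
  have hm : ∀ s : Fin n, Measurable fun p : EuclideanSpace ℝ (Fin d) × Fin c => ⟪a s, p.1⟫ :=
    fun s => Measurable.inner measurable_const measurable_fst
  have hAmeas : ∀ I : ∀ s, Fin (k s), MeasurableSet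
      {p : EuclideanSpace ℝ (Fin d) × Fin c |
        ∀ s, b s (I s).castSucc + δ < ⟪a s, p.1⟫ ∧ ⟪a s, p.1⟫ < b s (I s).succ - δ} := by
    intro I
    rw [Set.setOf_forall]
    refine MeasurableSet.iInter fun s => ?_
    rw [Set.setOf_and]
    exact (measurableSet_lt measurable_const (hm s)).inter
      (measurableSet_lt (hm s) measurable_const)
  have hCmeas : ∀ I : ∀ s, Fin (k s), MeasurableSet
      {p : EuclideanSpace ℝ (Fin d) × Fin c | p.2 = y I} := by
    intro I
    exact measurable_snd (measurableSet_singleton (y I))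
  have hSmeas : MeasurableSet {p : EuclideanSpace ℝ (Fin d) × Fin c |
      ∃ I : ∀ s, Fin (k s), ∀ s, b s (I s).castSucc + δ < ⟪a s, p.1⟫ ∧
        ⟪a s, p.1⟫ < b s (I s).succ - δ} := by
    rw [Set.setOf_exists]
    exact MeasurableSet.iUnion fun I => hAmeas I
  have hScompl : μ ({p : EuclideanSpace ℝ (Fin d) × Fin c |
      ∃ I : ∀ s, Fin (k s), ∀ s, b s (I s).castSucc + δ < ⟪a s, p.1⟫ ∧
        ⟪a s, p.1⟫ < b s (I s).succ - δ})ᶜ = 0 :=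
    (prob_compl_eq_zero_iff hSmeas).mpr hfull
  have hnullI : ∀ I : ∀ s, Fin (k s),
      μ ({p : EuclideanSpace ℝ (Fin d) × Fin c |
        ∀ s, b s (I s).castSucc + δ < ⟪a s, p.1⟫ ∧ ⟪a s, p.1⟫ < b s (I s).succ - δ}
        \ {p | p.2 = y I}) = 0 := by
    intro I
    have hinter : {p : EuclideanSpace ℝ (Fin d) × Fin c |
        (∀ s, b s (I s).castSucc + δ < ⟪a s, p.1⟫ ∧ ⟪a s, p.1⟫ < b s (I s).succ - δ)
        ∧ p.2 = y I}
        = {p : EuclideanSpace ℝ (Fin d) × Fin c |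
            ∀ s, b s (I s).castSucc + δ < ⟪a s, p.1⟫ ∧ ⟪a s, p.1⟫ < b s (I s).succ - δ}
          ∩ {p | p.2 = y I} := rfl
    have hd : {p : EuclideanSpace ℝ (Fin d) × Fin c |
        ∀ s, b s (I s).castSucc + δ < ⟪a s, p.1⟫ ∧ ⟪a s, p.1⟫ < b s (I s).succ - δ}
        \ {p | p.2 = y I}
        = {p : EuclideanSpace ℝ (Fin d) × Fin c |
            ∀ s, b s (I s).castSucc + δ < ⟪a s, p.1⟫ ∧ ⟪a s, p.1⟫ < b s (I s).succ - δ}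
        \ ({p : EuclideanSpace ℝ (Fin d) × Fin c |
            ∀ s, b s (I s).castSucc + δ < ⟪a s, p.1⟫ ∧ ⟪a s, p.1⟫ < b s (I s).succ - δ}
          ∩ {p | p.2 = y I}) := (Set.diff_self_inter).symm
    rw [hd, measure_diff Set.inter_subset_left
      (((hAmeas I).inter (hCmeas I)).nullMeasurableSet)
      (measure_ne_top μ _), ← hinter, hy I, tsub_self]
  refine measure_mono_null ?_
    (measure_union_null hScompl (measure_iUnion_null hnullI))
  intro p hp
  simp only [Set.mem_setOf_eq] at hp
  obtain ⟨j, hj⟩ := hp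
  by_cases hpS : ∃ I : ∀ s, Fin (k s), ∀ s, b s (I s).castSucc + δ < ⟪a s, p.1⟫ ∧
      ⟪a s, p.1⟫ < b s (I s).succ - δ
  · obtain ⟨I, hI⟩ := hpS
    by_cases hpy : p.2 = y I
    · exfalso
      have := key I p.1 hI j
      rw [← hpy] at this
      exact absurd hj (not_lt.mpr this)
    · right
      exact Set.mem_iUnion.mpr ⟨I, hI, hpy⟩
  · left
    exact hpS
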